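/- Define the orthonormal basis |ψ₀⟩ = cos(π/8)|0⟩ + sin(π/8)|1⟩ and |ψ₁⟩ = cos(5π/8)|0⟩ + sin(5π/8)|1⟩ of ℂ², and let M_b = |ψ_b⟩⟨ψ_b| for b ∈ {0,1}. Then for the four states ψ_{0,0}=|0⟩, ψ_{0,1}=|1⟩, ψ_{1,0}=(|0⟩+|1⟩)/√2, ψ_{1,1}=(|0⟩−|1⟩)/√2, one has (1/4)·Σ_{q,b} ⟨ψ_{q,b}| M_b |ψ_{q,b}⟩ = cos²(π/8). In particular, the bound cos²(π/8) in the single-round B₈₄ task is tight. -/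

import Mathlib

open Matrix ComplexOrder

/-- The four BB84 states `H^q |b⟩` as vectors in `ℂ²`. -/
noncomputable def bb84 (q b : Fin 2) : Fin 2 → ℂ :=
  if q = 0 then
    (if b = 0 then ![1, 0] else ![0, 1])
  else
    (if b = 0 then ![(((Real.sqrt 2)⁻¹ : ℝ) : ℂ), (((Real.sqrt 2)⁻¹ : ℝ) : ℂ)]
     else ![(((Real.sqrt 2)⁻¹ : ℝ) : ℂ), -(((Real.sqrt 2)⁻¹ : ℝ) : ℂ)])

/-- The intermediate basis states `|ψ_b⟩`, rotated by `π/8`. -/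
noncomputable def interBasis (b : Fin 2) : Fin 2 → ℂ :=
  if b = 0 then ![((Real.cos (Real.pi / 8) : ℝ) : ℂ), ((Real.sin (Real.pi / 8) : ℝ) : ℂ)]
  else ![((Real.cos (5 * Real.pi / 8) : ℝ) : ℂ), ((Real.sin (5 * Real.pi / 8) : ℝ) : ℂ)]

/-- The projective measurement `M_b = |ψ_b⟩⟨ψ_b|`. -/
noncomputable def interMeas (b : Fin 2) : Matrix (Fin 2) (Fin 2) ℂ :=
  vecMulVec (interBasis b) (star (interBasis b))

theorem stmt_14 :
    (1 / 4) * ∑ q : Fin 2, ∑ b : Fin 2,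
        (star (bb84 q b) ⬝ᵥ (interMeas b).mulVec (bb84 q b)).re
      = Real.cos (Real.pi / 8) ^ 2 := by
  have hc5 : Real.cos (5 * Real.pi / 8) = - Real.sin (Real.pi / 8) := by
    have h : (5 : ℝ) * Real.pi / 8 = Real.pi / 2 + Real.pi / 8 := by ring
    rw [h, Real.cos_add]; simp
  have hs5 : Real.sin (5 * Real.pi / 8) = Real.cos (Real.pi / 8) := by
    have h : (5 : ℝ) * Real.pi / 8 = Real.pi / 2 + Real.pi / 8 := by ring
    rw [h, Real.sin_add]; simp
  have hpyth : Real.sin (Real.pi / 8) ^ 2 + Real.cos (Real.pi / 8) ^ 2 = 1 :=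
    Real.sin_sq_add_cos_sq _
  have h2sc : 2 * Real.sin (Real.pi / 8) * Real.cos (Real.pi / 8) = Real.sqrt 2 / 2 := by
    have := Real.sin_two_mul (Real.pi / 8)
    have h4 : (2 : ℝ) * (Real.pi / 8) = Real.pi / 4 := by ring
    rw [h4, Real.sin_pi_div_four] at this
    linarith
  have hsq2 : (Real.sqrt 2) ^ 2 = 2 := Real.sq_sqrt (by norm_num)
  have hsq2ne : Real.sqrt 2 ≠ 0 := by positivity
  simp only [bb84, interBasis, interMeas, hc5, hs5]
  set c := Real.cos (Real.pi / 8) with hcdef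
  set s := Real.sin (Real.pi / 8) with hsdef
  set r := Real.sqrt 2 with hrdef
  simp only [Fin.sum_univ_two, mulVec, dotProduct, vecMulVec_apply, Pi.star_apply,
    Matrix.cons_val_zero, Matrix.cons_val_one, Matrix.head_cons, if_true,
    Complex.conj_ofReal, ← Complex.ofReal_neg]
  norm_num [← Complex.ofReal_mul, ← Complex.ofReal_add, ← Complex.ofReal_neg]
  have hdiff : 2 * c ^ 2 - 1 = r / 2 := by
    have := Real.cos_two_mul (Real.pi / 8)
    have h4 : (2 : ℝ) * (Real.pi / 8) = Real.pi / 4 := by ring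
    rw [h4, Real.cos_pi_div_four] at this
    rw [hcdef, hrdef]; linarith
  field_simp
  linear_combination 2*h2sc - 2*c^2*hsq2 - 2*hdiff + 2*hpyth
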